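/- arXiv:2604.02505 — 2 statements merged into one kernel-verified Lean document; each statement's English description precedes it below -/
import Mathlib

section
/- Let S and T be positive definite symmetric n×n matrices with S ⪯ T. Then tr(S^{1/2}(T^{-1/2} − S^{-1/2})) ≤ 0. -/
open Matrix
open scoped Classical

/-- The positive semidefinite square root of a matrix (zero if not PSD). -/
noncomputable def sqrtM {n : ℕ} (A : Matrix (Fin n) (Fin n) ℝ) : Matrix (Fin n) (Fin n) ℝ :=
  if h : A.PosSemidef then
    (h.1.eigenvectorUnitary : Matrix (Fin n) (Fin n) ℝ) * diagonal (Real.sqrt ∘ h.1.eigenvalues) *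
      (star h.1.eigenvectorUnitary : Matrix (Fin n) (Fin n) ℝ)
  else 0

/-- Euclidean norm of a vector. -/
noncomputable def euclNorm {n : ℕ} (v : Fin n → ℝ) : ℝ := Real.sqrt (v ⬝ᵥ v)

/-- The ℓ₂ operator (spectral) norm of a matrix. -/
noncomputable def opNorm {n : ℕ} (A : Matrix (Fin n) (Fin n) ℝ) : ℝ :=
  ⨆ u : {u : Fin n → ℝ // euclNorm u ≤ 1}, euclNorm (A *ᵥ u)

/-- Diagonal entries of a PSD real matrix are nonnegative. -/
lemma psd_diag_nonneg {n : ℕ} {M : Matrix (Fin n) (Fin n) ℝ} (hM : M.PosSemidef)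
    (i : Fin n) : 0 ≤ M i i := by
  exact hM.diag_nonneg

/-- Cauchy–Schwarz for the trace: (tr M)² ≤ n · tr(MᵀM). -/
lemma sq_trace_le {n : ℕ} (M : Matrix (Fin n) (Fin n) ℝ) :
    (M.trace) ^ 2 ≤ (n : ℝ) * (Mᵀ * M).trace := by
  have h1 : (∑ i, M i i) ^ 2 ≤ (n : ℝ) * ∑ i, (M i i) ^ 2 := by
    simpa using sq_sum_le_card_mul_sum_sq (s := (Finset.univ : Finset (Fin n)))
      (f := fun i => M i i)
  have h2 : ∑ i, (M i i) ^ 2 ≤ (Mᵀ * M).trace := by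
    rw [Matrix.trace]
    apply Finset.sum_le_sum
    intro j _
    have : (Mᵀ * M).diag j = ∑ i, (M i j) ^ 2 := by
      simp [Matrix.diag, Matrix.mul_apply, Matrix.transpose_apply, pow_two]
    rw [this]
    exact Finset.single_le_sum (f := fun i => (M i j) ^ 2)
      (fun i _ => sq_nonneg _) (Finset.mem_univ j)
  calc (M.trace) ^ 2 = (∑ i, M i i) ^ 2 := rfl
    _ ≤ (n : ℝ) * ∑ i, (M i i) ^ 2 := h1
    _ ≤ (n : ℝ) * (Mᵀ * M).trace := by
        apply mul_le_mul_of_nonneg_left h2 (by positivity)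

theorem trace_sqrt_mul_invsqrt_diff_nonpos {n : ℕ} {S T : Matrix (Fin n) (Fin n) ℝ}
    (hS : S.PosDef) (hT : T.PosDef) (hST : (T - S).PosSemidef) :
    (sqrtM S * ((sqrtM T)⁻¹ - (sqrtM S)⁻¹)).trace ≤ 0 := by
  have hSp := hS.posSemidef
  have hTp := hT.posSemidef
  set A := cfc Real.sqrt S with hAdef
  set B := cfc Real.sqrt T with hBdef
  have hsA : sqrtM S = A := by
    rw [sqrtM, dif_pos hSp, hAdef, hSp.1.cfc_eq, IsHermitian.cfc, Unitary.conjStarAlgAut_apply]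
    rfl
  have hsB : sqrtM T = B := by
    rw [sqrtM, dif_pos hTp, hBdef, hTp.1.cfc_eq, IsHermitian.cfc, Unitary.conjStarAlgAut_apply]
    rfl
  have hAA : A * A = S := by
    rw [hAdef, ← cfc_mul Real.sqrt Real.sqrt S]
    conv_rhs => rw [← cfc_id' ℝ S hSp.1]
    refine cfc_congr fun x hx => ?_
    rw [hSp.1.spectrum_real_eq_range_eigenvalues] at hx
    obtain ⟨i, rfl⟩ := hx
    exact Real.mul_self_sqrt (hSp.eigenvalues_nonneg i)
  have hBB : B * B = T := by
    rw [hBdef, ← cfc_mul Real.sqrt Real.sqrt T]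
    conv_rhs => rw [← cfc_id' ℝ T hTp.1]
    refine cfc_congr fun x hx => ?_
    rw [hTp.1.spectrum_real_eq_range_eigenvalues] at hx
    obtain ⟨i, rfl⟩ := hx
    exact Real.mul_self_sqrt (hTp.eigenvalues_nonneg i)
  -- A, B are invertible
  have hdetA : IsUnit A.det := by
    have : A.det * A.det = S.det := by rw [← Matrix.det_mul, hAA]
    have hS0 := hS.det_pos
    refine isUnit_iff_ne_zero.mpr fun h => ?_
    rw [h, mul_zero] at this
    exact (ne_of_gt hS0) this.symm
  have hdetB : IsUnit B.det := by
    have : B.det * B.det = T.det := by rw [← Matrix.det_mul, hBB]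
    have hT0 := hT.det_pos
    refine isUnit_iff_ne_zero.mpr fun h => ?_
    rw [h, mul_zero] at this
    exact (ne_of_gt hT0) this.symm
  -- symmetry facts
  have hAsym : Aᵀ = A := by
    have : IsSelfAdjoint A := cfc_predicate _ _
    rwa [IsSelfAdjoint, star_eq_conjTranspose, conjTranspose_eq_transpose_of_trivial] at this
  have hBsym : Bᵀ = B := by
    have : IsSelfAdjoint B := cfc_predicate _ _
    rwa [IsSelfAdjoint, star_eq_conjTranspose, conjTranspose_eq_transpose_of_trivial] at this
  have hBinvsym : (B⁻¹)ᵀ = B⁻¹ := by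
    rw [Matrix.transpose_nonsing_inv, hBsym]
  -- trace (A * A⁻¹) = n
  have hAAinv : A * A⁻¹ = 1 := Matrix.mul_nonsing_inv A hdetA
  -- key: 1 - B⁻¹ * S * B⁻¹ is PSD
  have hconj : (B⁻¹ * (T - S) * (B⁻¹)ᵀ).PosSemidef := by
    have := hST.mul_mul_conjTranspose_same (B⁻¹)
    rwa [conjTranspose_eq_transpose_of_trivial] at this
  have hBTB : B⁻¹ * T * B⁻¹ = 1 := by
    rw [← hBB, ← Matrix.mul_assoc, Matrix.nonsing_inv_mul B hdetB,
      Matrix.one_mul, Matrix.mul_nonsing_inv B hdetB]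
  have hpsd1 : (1 - B⁻¹ * S * B⁻¹).PosSemidef := by
    have : B⁻¹ * (T - S) * (B⁻¹)ᵀ = 1 - B⁻¹ * S * B⁻¹ := by
      rw [hBinvsym, Matrix.mul_sub, Matrix.sub_mul, hBTB]
    rwa [this] at hconj
  -- trace (B⁻¹ * S * B⁻¹) ≤ n
  have htr1 : (B⁻¹ * S * B⁻¹).trace ≤ (n : ℝ) := by
    have hle : ∀ i, (B⁻¹ * S * B⁻¹) i i ≤ 1 := by
      intro i
      have := psd_diag_nonneg hpsd1 i
      simp only [Matrix.sub_apply, Matrix.one_apply_eq] at this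
      linarith
    calc (B⁻¹ * S * B⁻¹).trace = ∑ i, (B⁻¹ * S * B⁻¹) i i := rfl
      _ ≤ ∑ _i : Fin n, (1 : ℝ) := Finset.sum_le_sum fun i _ => hle i
      _ = (n : ℝ) := by simp
  -- Cauchy–Schwarz
  set M := A * B⁻¹ with hMdef
  have hMt : Mᵀ * M = B⁻¹ * S * B⁻¹ := by
    rw [hMdef, Matrix.transpose_mul, hBinvsym, hAsym]
    rw [Matrix.mul_assoc, ← Matrix.mul_assoc A A (B⁻¹), hAA, ← Matrix.mul_assoc]
  have hcs : (M.trace) ^ 2 ≤ (n : ℝ) * (n : ℝ) := by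
    calc (M.trace) ^ 2 ≤ (n : ℝ) * (Mᵀ * M).trace := sq_trace_le M
      _ = (n : ℝ) * (B⁻¹ * S * B⁻¹).trace := by rw [hMt]
      _ ≤ (n : ℝ) * (n : ℝ) := by
          apply mul_le_mul_of_nonneg_left htr1 (by positivity)
  have htrM : M.trace ≤ (n : ℝ) := by nlinarith [Nat.cast_nonneg (α := ℝ) n]
  -- conclude
  rw [hsA, hsB, Matrix.mul_sub, Matrix.trace_sub, hAAinv, Matrix.trace_one]
  simp only [Fintype.card_fin]
  linarith [htrM]
end

section
/- Let m ∈ ℝ^n, let S be a positive definite symmetric n×n matrix, and define x = −η(mm^T + S)^{-1/2} m for some η > 0. Then the spectral norm of x, i.e., the Euclidean norm ‖x‖, satisfies ‖x‖ ≤ η. More precisely, the operator norm of the rank-one matrix xx^T is at most η². -/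
open Matrix
open scoped Classical

lemma vecMulVec_mulVec' {n : ℕ} (a b x : Fin n → ℝ) :
    vecMulVec a b *ᵥ x = (b ⬝ᵥ x) • a := by
  ext i
  simp [vecMulVec_apply, mulVec, dotProduct, Finset.mul_sum, mul_comm, mul_left_comm, mul_assoc]

lemma vecMulVec_posSemidef {n : ℕ} (m : Fin n → ℝ) : (vecMulVec m m).PosSemidef := by
  constructor
  · show _ᴴ = _
    rw [Matrix.conjTranspose_eq_transpose_of_trivial]
    ext i j
    simp [vecMulVec_apply, mul_comm]
  · have h := posSemidef_vecMulVec_self_star m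
    rw [star_trivial] at h
    exact h.2

lemma symm_mulVec_dot {n : ℕ} {B : Matrix (Fin n) (Fin n) ℝ} (hB : Bᵀ = B)
    (a b : Fin n → ℝ) : (B *ᵥ a) ⬝ᵥ b = a ⬝ᵥ (B *ᵥ b) := by
  rw [dotProduct_comm, dotProduct_mulVec, ← mulVec_transpose, hB, dotProduct_comm]

lemma dot_self_nonneg' {n : ℕ} (v : Fin n → ℝ) : 0 ≤ v ⬝ᵥ v :=
  Finset.sum_nonneg fun i _ => mul_self_nonneg _

lemma euclNorm_smul {n : ℕ} (c : ℝ) (v : Fin n → ℝ) :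
    euclNorm (c • v) = |c| * euclNorm v := by
  unfold euclNorm
  rw [smul_dotProduct, dotProduct_smul, smul_eq_mul, smul_eq_mul, ← mul_assoc,
    Real.sqrt_mul (mul_self_nonneg c), Real.sqrt_mul_self_eq_abs]

lemma cauchy_schwarz' {n : ℕ} (a b : Fin n → ℝ) :
    |a ⬝ᵥ b| ≤ euclNorm a * euclNorm b := by
  have h := Finset.sum_mul_sq_le_sq_mul_sq Finset.univ a b
  unfold euclNorm
  rw [← Real.sqrt_mul (dot_self_nonneg' a), ← Real.sqrt_sq_eq_abs]
  apply Real.sqrt_le_sqrt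
  simpa [dotProduct, sq] using h

theorem leon_feasibility {n : ℕ} (m : Fin n → ℝ) {S : Matrix (Fin n) (Fin n) ℝ}
    (hS : S.PosDef) {η : ℝ} (hη : 0 < η) {x : Fin n → ℝ}
    (hx : x = -(η • ((sqrtM (vecMulVec m m + S))⁻¹ *ᵥ m))) :
    euclNorm x ≤ η ∧ opNorm (vecMulVec x x) ≤ η ^ 2 := by
  set A := vecMulVec m m + S with hAdef
  have hA : A.PosDef := Matrix.PosDef.posSemidef_add (vecMulVec_posSemidef m) hS
  have hAP : A.PosSemidef := hA.posSemidef
  have hsqrtM : sqrtM A = (hAP.1.eigenvectorUnitary : Matrix (Fin n) (Fin n) ℝ) *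
    diagonal (Real.sqrt ∘ hAP.1.eigenvalues) * (star hAP.1.eigenvectorUnitary : Matrix (Fin n) (Fin n) ℝ) := dif_pos hAP
  set B := (hAP.1.eigenvectorUnitary : Matrix (Fin n) (Fin n) ℝ) *
    diagonal (Real.sqrt ∘ hAP.1.eigenvalues) * (star hAP.1.eigenvectorUnitary : Matrix (Fin n) (Fin n) ℝ) with hBdef
  have hBP : B.PosSemidef := by
    have := (PosSemidef.diagonal (d := Real.sqrt ∘ hAP.1.eigenvalues) (fun i => Real.sqrt_nonneg _)).mul_mul_conjTranspose_same (hAP.1.eigenvectorUnitary : Matrix (Fin n) (Fin n) ℝ)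
    simpa [B, star_eq_conjTranspose] using this
  have hBsymm : Bᵀ = B := by
    rw [← Matrix.conjTranspose_eq_transpose_of_trivial]; exact hBP.1
  have hBB : B * B = A := by
    have hU : (star hAP.1.eigenvectorUnitary : Matrix (Fin n) (Fin n) ℝ) * (hAP.1.eigenvectorUnitary : Matrix (Fin n) (Fin n) ℝ) = 1 :=
      Matrix.mem_unitaryGroup_iff'.mp hAP.1.eigenvectorUnitary.2
    have hD : diagonal (Real.sqrt ∘ hAP.1.eigenvalues) * diagonal (Real.sqrt ∘ hAP.1.eigenvalues) = diagonal hAP.1.eigenvalues := by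
      rw [diagonal_mul_diagonal]; congr 1; ext i
      simp [Real.mul_self_sqrt (hAP.eigenvalues_nonneg i)]
    have hs := hAP.1.spectral_theorem
    conv_rhs => rw [hs]
    rw [Unitary.conjStarAlgAut_apply]
    rw [show (RCLike.ofReal ∘ hAP.1.eigenvalues : Fin n → ℝ) = hAP.1.eigenvalues from rfl, ← hD]
    simp only [B, Matrix.mul_assoc]
    rw [← Matrix.mul_assoc (star _) (_ : Matrix (Fin n) (Fin n) ℝ), hU, Matrix.one_mul]
  have hdetB : B.det ≠ 0 := by
    intro h
    have : A.det = 0 := by rw [← hBB, Matrix.det_mul, h, mul_zero]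
    exact hA.det_pos.ne' this
  have hBinv : B * B⁻¹ = 1 := Matrix.mul_nonsing_inv B (isUnit_iff_ne_zero.mpr hdetB)
  set y : Fin n → ℝ := B⁻¹ *ᵥ m with hydef
  have hxy : x = -(η • y) := by rw [hx, hsqrtM]
  have hBy : B *ᵥ y = m := by
    rw [hydef, Matrix.mulVec_mulVec, hBinv, Matrix.one_mulVec]
  set t : ℝ := y ⬝ᵥ y with htdef
  have ht0 : 0 ≤ t := dot_self_nonneg' y
  -- show t ≤ 1
  set u : Fin n → ℝ := B⁻¹ *ᵥ y with hudef
  have hBu : B *ᵥ u = y := by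
    rw [hudef, Matrix.mulVec_mulVec, hBinv, Matrix.one_mulVec]
  have hmu : m ⬝ᵥ u = t := by
    rw [← hBy, symm_mulVec_dot hBsymm, hBu]
  have hAu : u ⬝ᵥ (A *ᵥ u) = t := by
    rw [← hBB, ← Matrix.mulVec_mulVec u B B, ← symm_mulVec_dot hBsymm, hBu]
  have hsplit : u ⬝ᵥ (A *ᵥ u) = t ^ 2 + u ⬝ᵥ (S *ᵥ u) := by
    rw [hAdef, Matrix.add_mulVec, dotProduct_add, vecMulVec_mulVec', dotProduct_smul,
      smul_eq_mul, dotProduct_comm u m, hmu, sq]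
  have hq : 0 ≤ u ⬝ᵥ (S *ᵥ u) := by
    have := hS.posSemidef.dotProduct_mulVec_nonneg u
    simpa using this
  have ht1 : t ≤ 1 := by nlinarith [hAu, hsplit, hq, ht0]
  have hxx : x ⬝ᵥ x = η ^ 2 * t := by
    rw [hxy]
    simp [neg_dotProduct, dotProduct_neg, smul_dotProduct, dotProduct_smul, ← htdef]
    ring
  have hnormx : euclNorm x ≤ η := by
    rw [euclNorm, hxx]
    calc Real.sqrt (η ^ 2 * t) ≤ Real.sqrt (η ^ 2 * 1) := by
          apply Real.sqrt_le_sqrt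
          nlinarith
      _ = η := by rw [mul_one, Real.sqrt_sq hη.le]
  refine ⟨hnormx, ?_⟩
  have hne : Nonempty {u : Fin n → ℝ // euclNorm u ≤ 1} :=
    ⟨⟨0, by simp [euclNorm]⟩⟩
  apply ciSup_le
  rintro ⟨v, hv⟩
  have h1 : euclNorm (vecMulVec x x *ᵥ v) = |x ⬝ᵥ v| * euclNorm x := by
    rw [vecMulVec_mulVec', euclNorm_smul, dotProduct_comm]
  rw [h1]
  have h2 : |x ⬝ᵥ v| ≤ euclNorm x * euclNorm v := cauchy_schwarz' x v
  have h3 : 0 ≤ euclNorm x := Real.sqrt_nonneg _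
  have h4 : 0 ≤ euclNorm v := Real.sqrt_nonneg _
  calc |x ⬝ᵥ v| * euclNorm x ≤ (euclNorm x * euclNorm v) * euclNorm x := by
        exact mul_le_mul_of_nonneg_right h2 h3
    _ ≤ (η * 1) * η := by
        apply mul_le_mul (mul_le_mul hnormx hv h4 hη.le) hnormx h3 (by positivity)
    _ = η ^ 2 := by ring
end
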